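/- Probability generating function of the ECM distribution: for every family of complex numbers z = (z_{k,l})_{1≤k≤n, 1≤l≤m_k} with |z_{k,l}| ≤ 1 for all k, l, one has ∫_{P^N} ∏_{k=1}^n ∏_{l=1}^{m_k} z_{k,l}^{Q_{k,l}(ω)} dμ^{⊗N}(ω) = ( ∑_{l_1=1}^{m_1} ⋯ ∑_{l_n=1}^{m_n} p_{l_1,…,l_n} · ∏_{k=1}^n z_{k,l_k} )^N. -/

import Mathlib

open MeasureTheory

/-- Probability generating function of the evolving categories multinomial (ECM)
distribution. -/
theorem ecm_probability_generating_function
    {n N : ℕ} (hn : 1 ≤ n) (hN : 1 ≤ N)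
    {m : Fin n → ℕ} (hm : ∀ k, 1 ≤ m k)
    (μ : Measure (Π k : Fin n, Fin (m k))) [IsProbabilityMeasure μ]
    (z : Π k : Fin n, Fin (m k) → ℂ)
    (hz : ∀ k l, ‖z k l‖ ≤ 1) :
    ∫ ω : Fin N → Π k : Fin n, Fin (m k),
        ∏ k : Fin n, ∏ l : Fin (m k), z k l ^ (Nat.card {j : Fin N // ω j k = l})
        ∂(Measure.pi fun _ : Fin N => μ)
      = (∑ x : Π k : Fin n, Fin (m k),
          ((μ {x}).toReal : ℂ) * ∏ k : Fin n, z k (x k)) ^ N := by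
  have key : ∀ ω : Fin N → Π k : Fin n, Fin (m k),
      (∏ k : Fin n, ∏ l : Fin (m k), z k l ^ (Nat.card {j : Fin N // ω j k = l}))
        = ∏ j : Fin N, ∏ k : Fin n, z k (ω j k) := by
    intro ω
    rw [Finset.prod_comm]
    refine Finset.prod_congr rfl fun k _ => ?_
    have := Finset.prod_fiberwise' (Finset.univ : Finset (Fin N))
      (fun j => ω j k) (fun l => z k l)
    rw [← this]
    refine Finset.prod_congr rfl fun l _ => ?_
    rw [Finset.prod_const, Nat.card_eq_fintype_card, Fintype.card_subtype]
  simp_rw [key]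
  letI : MeasureSpace (Π k : Fin n, Fin (m k)) := ⟨μ⟩
  have hvol : (Measure.pi fun _ : Fin N => μ)
      = (volume : Measure (Fin N → Π k : Fin n, Fin (m k))) := by
    rw [MeasureTheory.volume_pi]; rfl
  rw [hvol, ← hvol]
  rw [MeasureTheory.integral_fintype_prod_eq_pow (ι := Fin N) (μ := μ)
    (fun x : Π k : Fin n, Fin (m k) => ∏ k : Fin n, z k (x k))]
  rw [Fintype.card_fin]
  congr 1
  rw [MeasureTheory.integral_fintype (Integrable.of_finite)]
  refine Finset.sum_congr rfl fun x _ => ?_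
  rw [Complex.real_smul]
  rfl
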